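/- Let η > 0, s ≥ 0, 0 < T ≤ 1, and S(t) the semigroup with symbol e^{(iβk|k|−η(k²−|k|))t} on H^s(𝕋). Then for all u, v ∈ C([0,T]; H^s(𝕋)), sup_{t∈[0,T]} ‖∫_0^t S(t−t') ∂_x(uv)(t') dt'‖_{H^s} ≤ C(s,η) T^{1/4} (sup_t ‖u(t)‖_{H^s})(sup_t ‖v(t)‖_{H^s}). -/

import Mathlib

/-- The H^s(𝕋) norm, expressed through the Fourier coefficients. -/
noncomputable def hsNorm (s : ℝ) (f : ℤ → ℂ) : ℝ :=
  Real.sqrt (2 * Real.pi * ∑' k : ℤ, (1 + (k:ℝ) ^ 2) ^ s * ‖f k‖ ^ 2)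

/-- The Fourier symbol `e^{(iβk|k| − η(k²−|k|)) t}` of the Chen–Lee semigroup `S(t)`. -/
noncomputable def semigroupSymbol (β η t : ℝ) (k : ℤ) : ℂ :=
  Complex.exp ((Complex.I * (β * (k:ℝ) * |(k:ℝ)| : ℝ) -
    ((η * ((k:ℝ) ^ 2 - |(k:ℝ)|) : ℝ) : ℂ)) * (t : ℝ))

/-- The k-th Fourier coefficient of the Duhamel term `∫_0^t S(t−t') ∂ₓ(uv)(t') dt'`. -/
noncomputable def duhamel (β η : ℝ) (u v : ℝ → ℤ → ℂ) (t : ℝ) (k : ℤ) : ℂ :=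
  ∫ t' in Set.Ioo (0:ℝ) t,
    semigroupSymbol β η (t - t') k *
      (Complex.I * (k:ℝ) * ∑' j : ℤ, u t' j * v t' (k - j))


open MeasureTheory Finset

lemma tele (N : ℕ) (hN : 1 ≤ N) : ∑' n : ℕ, (1:ℝ)/(((n:ℝ)+1+N)^2) ≤ 1/(N:ℝ) := by
  have hNpos : (0:ℝ) < N := by exact_mod_cast hN
  apply Real.tsum_le_of_sum_range_le (fun n => by positivity)
  intro m
  have h1 : ∀ n : ℕ, (1:ℝ)/(((n:ℝ)+1+N)^2) ≤ 1/((n:ℝ)+N) - 1/(((n:ℝ)+1)+N) := by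
    intro n
    have ha : (0:ℝ) < (n:ℝ) + N := by positivity
    have hb : (0:ℝ) < (n:ℝ) + 1 + N := by positivity
    rw [div_sub_div _ _ (ne_of_gt ha) (ne_of_gt hb)]
    rw [div_le_div_iff₀ (by positivity) (by positivity)]
    ring_nf
    nlinarith [sq_nonneg ((n:ℝ)+N)]
  calc ∑ n ∈ range m, (1:ℝ)/(((n:ℝ)+1+N)^2)
      ≤ ∑ n ∈ range m, ((1:ℝ)/((n:ℝ)+N) - 1/(((n:ℝ)+1)+N)) := Finset.sum_le_sum (fun n _ => h1 n)
    _ = 1/((0:ℝ)+N) - 1/((m:ℝ)+N) := by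
        have := Finset.sum_range_sub' (fun i : ℕ => (1:ℝ)/((i:ℝ)+N)) m
        simp only [Nat.cast_add, Nat.cast_one, Nat.cast_zero] at this
        exact this
    _ ≤ 1/(N:ℝ) := by
        simp only [Nat.cast_zero, zero_add]
        have : (0:ℝ) ≤ 1/((m:ℝ)+N) := by positivity
        linarith

lemma keyNat {c t : ℝ} (hc : 1 ≤ c) (ht : 0 < t) (ht1 : t ≤ 1) :
    Summable (fun n : ℕ => ((n:ℝ)+1)^2 * (min t (c/((n:ℝ)+1)^2))^2) ∧
    ∑' n : ℕ, ((n:ℝ)+1)^2 * (min t (c/((n:ℝ)+1)^2))^2 ≤ (8 + c^2) * Real.sqrt t := by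
  set f : ℕ → ℝ := fun n => ((n:ℝ)+1)^2 * (min t (c/((n:ℝ)+1)^2))^2 with hf
  have hfnn : ∀ n, 0 ≤ f n := fun n => by positivity
  have hfle : ∀ n : ℕ, f n ≤ c^2 / ((n:ℝ)+1)^2 := by
    intro n
    have h1 : (0:ℝ) < ((n:ℝ)+1)^2 := by positivity
    have h2 : (min t (c/((n:ℝ)+1)^2))^2 ≤ (c/((n:ℝ)+1)^2)^2 := by
      apply pow_le_pow_left₀ (le_min ht.le (by positivity)) (min_le_right _ _)
    calc f n ≤ ((n:ℝ)+1)^2 * (c/((n:ℝ)+1)^2)^2 := by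
            exact mul_le_mul_of_nonneg_left h2 h1.le
      _ = c^2 / ((n:ℝ)+1)^2 := by field_simp
  have hbase : Summable (fun n : ℕ => (1:ℝ) / (n:ℝ)^2) :=
    Real.summable_one_div_nat_pow.2 (by norm_num)
  have hsum2 : Summable (fun n : ℕ => c^2 / ((n:ℝ)+1)^2) := by
    have h1 : Summable (fun n : ℕ => (1:ℝ) / ((n+1:ℕ):ℝ)^2) :=
      hbase.comp_injective (add_left_injective 1)
    have h2 := h1.mul_left (c^2)
    apply h2.congr
    intro n
    push_cast
    ring
  have hsum : Summable f := Summable.of_nonneg_of_le hfnn hfle hsum2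
  refine ⟨hsum, ?_⟩
  set r := Real.sqrt t with hr
  have hr0 : 0 < r := Real.sqrt_pos.2 ht
  have hr1 : r ≤ 1 := by
    rw [hr, show (1:ℝ) = Real.sqrt 1 by simp]
    exact Real.sqrt_le_sqrt ht1
  have hrsq : r^2 = t := Real.sq_sqrt ht.le
  set N : ℕ := ⌈1/r⌉₊ with hN
  have hN1 : 1 ≤ N := by
    rw [hN]
    apply Nat.one_le_ceil_iff.2
    positivity
  have hNlb : 1/r ≤ (N:ℝ) := Nat.le_ceil _
  have hNub : (N:ℝ) ≤ 2/r := by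
    calc (N:ℝ) ≤ 1/r + 1 := (Nat.ceil_lt_add_one (by positivity)).le
      _ ≤ 2/r := by
          have : (1:ℝ) ≤ 1/r := (le_div_iff₀ hr0).2 (by linarith)
          rw [div_add' _ _ _ (ne_of_gt hr0)] at *
          rw [div_le_div_iff₀ hr0 hr0]
          nlinarith
  -- split the sum
  have hshift : Summable (fun n : ℕ => f (n + N)) := hsum.comp_injective (add_left_injective N)
  have hsplit := Summable.sum_add_tsum_nat_add (f := f) N hsum
  -- first part
  have hpart1 : ∑ n ∈ range N, f n ≤ 8 * r := by
    have hterm : ∀ n ∈ range N, f n ≤ (N:ℝ)^2 * t^2 := by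
      intro n hn
      have hn' : (n:ℝ) + 1 ≤ (N:ℝ) := by
        have := Finset.mem_range.1 hn
        exact_mod_cast Nat.succ_le_of_lt this
      calc f n ≤ ((n:ℝ)+1)^2 * t^2 := by
            apply mul_le_mul_of_nonneg_left _ (by positivity)
            apply pow_le_pow_left₀ (le_min ht.le (by positivity)) (min_le_left _ _)
        _ ≤ (N:ℝ)^2 * t^2 := by
            apply mul_le_mul_of_nonneg_right _ (by positivity)
            apply pow_le_pow_left₀ (by positivity) hn'
    calc ∑ n ∈ range N, f n ≤ ∑ _n ∈ range N, (N:ℝ)^2 * t^2 := Finset.sum_le_sum hterm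
      _ = (N:ℝ)^3 * t^2 := by
          rw [Finset.sum_const, Finset.card_range]; ring
      _ ≤ (2/r)^3 * t^2 := by
          apply mul_le_mul_of_nonneg_right _ (by positivity)
          exact pow_le_pow_left₀ (by positivity) hNub 3
      _ = 8 * r := by
          have : t = r^2 := hrsq.symm
          rw [this]; field_simp; ring
  -- second part
  have hpart2 : ∑' n : ℕ, f (n + N) ≤ c^2 * r := by
    have hterm : ∀ n : ℕ, f (n + N) ≤ c^2 * (1/(((n:ℝ)+1+N)^2)) := by
      intro n
      calc f (n+N) ≤ c^2 / (((n+N:ℕ):ℝ)+1)^2 := hfle _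
        _ = c^2 * (1/(((n:ℝ)+1+N)^2)) := by push_cast; ring_nf
    have hmaj : Summable (fun n : ℕ => c^2 * ((1:ℝ)/(((n:ℝ)+1+N)^2))) := by
      have h1 : Summable (fun n : ℕ => (1:ℝ) / ((n+(N+1):ℕ):ℝ)^2) :=
        hbase.comp_injective (add_left_injective (N+1))
      apply (h1.mul_left (c^2)).congr
      intro n; push_cast; ring_nf
    have h3 := Summable.tsum_le_tsum hterm hshift hmaj
    have h4 : ∑' n : ℕ, c^2 * ((1:ℝ)/(((n:ℝ)+1+N)^2)) = c^2 * ∑' n : ℕ, (1:ℝ)/(((n:ℝ)+1+N)^2) :=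
      tsum_mul_left
    have h5 := tele N hN1
    have h6 : (1:ℝ)/(N:ℝ) ≤ r := by
      rw [div_le_iff₀ (by exact_mod_cast Nat.lt_of_lt_of_le Nat.zero_lt_one hN1)]
      rw [div_le_iff₀ hr0] at hNlb
      linarith [mul_comm r (N:ℝ) ▸ hNlb]
    calc ∑' n : ℕ, f (n+N) ≤ c^2 * ∑' n : ℕ, (1:ℝ)/(((n:ℝ)+1+N)^2) := by rw [← h4]; exact h3
      _ ≤ c^2 * (1/(N:ℝ)) := by
          apply mul_le_mul_of_nonneg_left h5 (by positivity)
      _ ≤ c^2 * r := mul_le_mul_of_nonneg_left h6 (by positivity)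
  calc ∑' n : ℕ, f n = ∑ n ∈ range N, f n + ∑' n : ℕ, f (n+N) := hsplit.symm
    _ ≤ 8 * r + c^2 * r := add_le_add hpart1 hpart2
    _ = (8 + c^2) * Real.sqrt t := by rw [hr]; ring

lemma keyInt {c t : ℝ} (hc : 1 ≤ c) (ht : 0 < t) (ht1 : t ≤ 1) :
    Summable (fun k : ℤ => (k:ℝ)^2 * (min t (c/(k:ℝ)^2))^2) ∧
    ∑' k : ℤ, (k:ℝ)^2 * (min t (c/(k:ℝ)^2))^2 ≤ (2*(8 + c^2)) * Real.sqrt t := by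
  obtain ⟨hsumf, hboundf⟩ := keyNat hc ht ht1
  set F : ℤ → ℝ := fun k => (k:ℝ)^2 * (min t (c/(k:ℝ)^2))^2 with hF
  set f : ℕ → ℝ := fun n => ((n:ℝ)+1)^2 * (min t (c/((n:ℝ)+1)^2))^2 with hf
  have hposeq : ∀ n : ℕ, F ((n:ℤ) + 1) = f n := by
    intro n; simp only [hF, hf]; push_cast; ring_nf
  have hnegeq : ∀ n : ℕ, F (-((n:ℤ) + 1)) = f n := by
    intro n; simp only [hF, hf]; push_cast; ring_nf
  have hFnat : Summable (fun n : ℕ => F (n:ℤ)) := by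
    rw [← summable_nat_add_iff 1]
    apply hsumf.congr
    intro n
    rw [show ((n + 1 : ℕ) : ℤ) = (n:ℤ) + 1 by push_cast; ring, hposeq n]
  have hFneg : Summable (fun n : ℕ => F (-((n:ℤ) + 1))) := by
    apply hsumf.congr; intro n; exact (hnegeq n).symm
  have hsumF : Summable F := Summable.of_nat_of_neg_add_one hFnat hFneg
  refine ⟨hsumF, ?_⟩
  have htsum : ∑' k : ℤ, F k = (∑' n : ℕ, F (n:ℤ)) + ∑' n : ℕ, F (-((n:ℤ)+1)) :=
    tsum_of_nat_of_neg_add_one hFnat hFneg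
  have h1 : ∑' n : ℕ, F (n:ℤ) = F 0 + ∑' n : ℕ, F ((n:ℤ)+1) := by
    rw [Summable.tsum_eq_zero_add hFnat]
    have : ∀ n : ℕ, F ((n + 1 : ℕ) : ℤ) = F ((n:ℤ)+1) := by
      intro n; norm_cast
    simp only [this]; norm_num
  have hF0 : F 0 = 0 := by simp [hF]
  have h2 : ∑' n : ℕ, F ((n:ℤ)+1) = ∑' n : ℕ, f n := tsum_congr hposeq
  have h3 : ∑' n : ℕ, F (-((n:ℤ)+1)) = ∑' n : ℕ, f n := tsum_congr hnegeq
  rw [htsum, h1, hF0, h2, h3, zero_add]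
  linarith [hboundf]

lemma csTsum {a b : ℤ → ℝ} (ha : ∀ j, 0 ≤ a j) (hb : ∀ j, 0 ≤ b j)
    (ha2 : Summable (fun j => a j^2)) (hb2 : Summable (fun j => b j^2)) :
    Summable (fun j => a j * b j) ∧
    ∑' j, a j * b j ≤ Real.sqrt (∑' j, a j^2) * Real.sqrt (∑' j, b j^2) := by
  have hsum : Summable (fun j => a j * b j) := by
    apply Summable.of_nonneg_of_le (fun j => mul_nonneg (ha j) (hb j))
      (fun j => ?_) ((ha2.add hb2).div_const 2)
    have := two_mul_le_add_sq (a j) (b j)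
    show a j * b j ≤ (a j^2 + b j^2)/2
    linarith
  refine ⟨hsum, Summable.tsum_le_of_sum_le hsum (fun s => ?_)⟩
  calc ∑ j ∈ s, a j * b j
      ≤ Real.sqrt (∑ j ∈ s, a j^2) * Real.sqrt (∑ j ∈ s, b j^2) :=
        Real.sum_mul_le_sqrt_mul_sqrt s a b
    _ ≤ Real.sqrt (∑' j, a j^2) * Real.sqrt (∑' j, b j^2) := by
        apply mul_le_mul (Real.sqrt_le_sqrt (Summable.sum_le_tsum s (fun j _ => sq_nonneg _) ha2))
          (Real.sqrt_le_sqrt (Summable.sum_le_tsum s (fun j _ => sq_nonneg _) hb2))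
          (Real.sqrt_nonneg _) (Real.sqrt_nonneg _)

lemma weight {s : ℝ} (hs : 0 ≤ s) (j k : ℤ) :
    (1 + (k:ℝ)^2) ^ (s/2) ≤
      2 ^ (s/2) * ((1 + (j:ℝ)^2) ^ (s/2) * (1 + ((k-j:ℤ):ℝ)^2) ^ (s/2)) := by
  have base : (1 + (k:ℝ)^2) ≤ 2 * ((1 + (j:ℝ)^2) * (1 + ((k-j:ℤ):ℝ)^2)) := by
    push_cast
    nlinarith [sq_nonneg ((j:ℝ) - ((k:ℝ)-(j:ℝ))), sq_nonneg ((j:ℝ)*((k:ℝ)-(j:ℝ)))]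
  have h1 : (0:ℝ) ≤ 1 + (j:ℝ)^2 := by positivity
  have h2 : (0:ℝ) ≤ 1 + ((k-j:ℤ):ℝ)^2 := by positivity
  calc (1 + (k:ℝ)^2) ^ (s/2)
      ≤ (2 * ((1 + (j:ℝ)^2) * (1 + ((k-j:ℤ):ℝ)^2))) ^ (s/2) :=
        Real.rpow_le_rpow (by positivity) base (by linarith)
    _ = 2 ^ (s/2) * ((1 + (j:ℝ)^2) ^ (s/2) * (1 + ((k-j:ℤ):ℝ)^2) ^ (s/2)) := by
        rw [Real.mul_rpow (by norm_num) (by positivity), Real.mul_rpow h1 h2]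

lemma sq_rpow_half {x s : ℝ} (hx : 0 < x) : (x ^ (s/2))^2 = x ^ s := by
  rw [sq, ← Real.rpow_add hx]
  norm_num

lemma expInt {a t : ℝ} (ha : 0 ≤ a) (ht : 0 < t) :
    (∫ τ in Set.Ioo (0:ℝ) t, Real.exp (-(a*(t-τ)))) ≤ t ∧
    (0 < a → (∫ τ in Set.Ioo (0:ℝ) t, Real.exp (-(a*(t-τ)))) ≤ 1/a) := by
  have hcont : Continuous fun τ : ℝ => Real.exp (-(a*(t-τ))) := by continuity
  have hint : IntegrableOn (fun τ => Real.exp (-(a*(t-τ)))) (Set.Ioo 0 t) :=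
    (hcont.integrableOn_Icc (a := 0) (b := t)).mono_set Set.Ioo_subset_Icc_self
  constructor
  · calc (∫ τ in Set.Ioo (0:ℝ) t, Real.exp (-(a*(t-τ))))
        ≤ ∫ _τ in Set.Ioo (0:ℝ) t, (1:ℝ) := by
          apply setIntegral_mono_on hint (integrableOn_const (by
            rw [Real.volume_Ioo]; exact ENNReal.ofReal_ne_top)) measurableSet_Ioo
          intro x hx
          apply Real.exp_le_one_iff.2
          nlinarith [hx.2]
      _ = t := by
          rw [setIntegral_const]
          simp [Real.volume_Ioo, ENNReal.toReal_ofReal ht.le, ht.le]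
  · intro hapos
    have heq : (∫ τ in Set.Ioo (0:ℝ) t, Real.exp (-(a*(t-τ)))) =
        ∫ τ in (0:ℝ)..t, Real.exp (-(a*(t-τ))) := by
      rw [intervalIntegral.integral_of_le ht.le, integral_Ioc_eq_integral_Ioo]
    rw [heq]
    have hderiv : ∀ τ ∈ Set.uIcc (0:ℝ) t,
        HasDerivAt (fun τ => Real.exp (-(a*(t-τ)))/a) (Real.exp (-(a*(t-τ)))) τ := by
      intro τ _
      have hg : HasDerivAt (fun τ : ℝ => -(a*(t-τ))) a τ := by
        have : HasDerivAt (fun τ : ℝ => a*τ - a*t) a τ := by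
          simpa using ((hasDerivAt_id τ).const_mul a).sub_const (a*t)
        apply this.congr_deriv ?_ |>.congr_of_eventuallyEq ?_
        · rfl
        · filter_upwards with x; ring
      have := (hg.exp).div_const a
      rw [mul_div_assoc, div_self hapos.ne', mul_one] at this
      exact this
    rw [intervalIntegral.integral_eq_sub_of_hasDerivAt hderiv
      (hcont.intervalIntegrable 0 t)]
    simp only [sub_self, mul_zero, neg_zero, Real.exp_zero]
    have hb : 0 ≤ Real.exp (-(a*(t-0)))/a := by positivity
    linarith [hb]

set_option maxHeartbeats 1000000 in
lemma convBound {s : ℝ} (hs : 0 ≤ s) (k : ℤ) (U V : ℤ → ℂ)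
    (hU : Summable fun j : ℤ => (1 + (j:ℝ)^2) ^ s * ‖U j‖^2)
    (hV : Summable fun j : ℤ => (1 + (j:ℝ)^2) ^ s * ‖V j‖^2) :
    (1 + (k:ℝ)^2) ^ (s/2) * ‖∑' j : ℤ, U j * V (k - j)‖ ≤
      2 ^ (s/2) * (Real.sqrt (∑' j : ℤ, (1 + (j:ℝ)^2) ^ s * ‖U j‖^2) *
        Real.sqrt (∑' j : ℤ, (1 + (j:ℝ)^2) ^ s * ‖V j‖^2)) := by
  set QU := Real.sqrt (∑' j : ℤ, (1 + (j:ℝ)^2) ^ s * ‖U j‖^2) with hQU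
  set QV := Real.sqrt (∑' j : ℤ, (1 + (j:ℝ)^2) ^ s * ‖V j‖^2) with hQV
  have hQUnn : 0 ≤ QU := Real.sqrt_nonneg _
  have hQVnn : 0 ≤ QV := Real.sqrt_nonneg _
  have hRHSnn : (0:ℝ) ≤ 2 ^ (s/2) * (QU * QV) := by positivity
  by_cases hS : Summable (fun j : ℤ => U j * V (k - j))
  swap
  · rw [tsum_eq_zero_of_not_summable hS]
    simpa using hRHSnn
  -- summable case
  set a : ℤ → ℝ := fun j => (1 + (j:ℝ)^2) ^ (s/2) * ‖U j‖ with haa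
  set b : ℤ → ℝ := fun j => (1 + ((k-j:ℤ):ℝ)^2) ^ (s/2) * ‖V (k - j)‖ with hbb
  have hann : ∀ j, 0 ≤ a j := fun j => by positivity
  have hbnn : ∀ j, 0 ≤ b j := fun j => by positivity
  have ha2 : Summable (fun j => a j ^ 2) := by
    apply hU.congr
    intro j
    simp only [haa, mul_pow, sq_rpow_half (by positivity : (0:ℝ) < 1 + (j:ℝ)^2)]
  have hVshift : Summable (fun j : ℤ => (1 + ((k-j:ℤ):ℝ)^2) ^ s * ‖V (k - j)‖^2) :=
    ((Equiv.subLeft k).summable_iff).2 hV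
  have hb2 : Summable (fun j => b j ^ 2) := by
    apply hVshift.congr
    intro j
    simp only [hbb, mul_pow, sq_rpow_half (by positivity : (0:ℝ) < 1 + ((k-j:ℤ):ℝ)^2)]
  obtain ⟨hsab, hcs⟩ := csTsum hann hbnn ha2 hb2
  have hb2sum : ∑' j, b j ^ 2 = ∑' j : ℤ, (1 + (j:ℝ)^2) ^ s * ‖V j‖^2 := by
    rw [show (fun j => b j ^ 2) = fun j => (1 + ((k-j:ℤ):ℝ)^2) ^ s * ‖V (k - j)‖^2 from ?_]
    · exact (Equiv.subLeft k).tsum_eq (fun j => (1 + (j:ℝ)^2) ^ s * ‖V j‖^2)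
    · funext j
      simp only [hbb, mul_pow, sq_rpow_half (by positivity : (0:ℝ) < 1 + ((k-j:ℤ):ℝ)^2)]
  have ha2sum : ∑' j, a j ^ 2 = ∑' j : ℤ, (1 + (j:ℝ)^2) ^ s * ‖U j‖^2 := by
    apply tsum_congr; intro j
    simp only [haa, mul_pow, sq_rpow_half (by positivity : (0:ℝ) < 1 + (j:ℝ)^2)]
  -- norm of tsum ≤ tsum of norms
  have hnorms : Summable (fun j : ℤ => ‖U j * V (k - j)‖) := hS.norm
  have h1 : ‖∑' j : ℤ, U j * V (k - j)‖ ≤ ∑' j : ℤ, ‖U j * V (k - j)‖ :=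
    norm_tsum_le_tsum_norm hnorms
  have hw : (0:ℝ) < (1 + (k:ℝ)^2) ^ (s/2) := by positivity
  have hpt : ∀ j : ℤ, (1 + (k:ℝ)^2) ^ (s/2) * ‖U j * V (k - j)‖ ≤ 2 ^ (s/2) * (a j * b j) := by
    intro j
    rw [norm_mul]
    calc (1 + (k:ℝ)^2) ^ (s/2) * (‖U j‖ * ‖V (k-j)‖)
        ≤ (2 ^ (s/2) * ((1 + (j:ℝ)^2) ^ (s/2) * (1 + ((k-j:ℤ):ℝ)^2) ^ (s/2))) *
            (‖U j‖ * ‖V (k-j)‖) := by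
          apply mul_le_mul_of_nonneg_right (weight hs j k) (by positivity)
      _ = 2 ^ (s/2) * (a j * b j) := by simp only [haa, hbb]; ring
  calc (1 + (k:ℝ)^2) ^ (s/2) * ‖∑' j : ℤ, U j * V (k - j)‖
      ≤ (1 + (k:ℝ)^2) ^ (s/2) * ∑' j : ℤ, ‖U j * V (k - j)‖ :=
        mul_le_mul_of_nonneg_left h1 hw.le
    _ = ∑' j : ℤ, (1 + (k:ℝ)^2) ^ (s/2) * ‖U j * V (k - j)‖ := tsum_mul_left.symm
    _ ≤ ∑' j : ℤ, 2 ^ (s/2) * (a j * b j) := by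
        apply Summable.tsum_le_tsum hpt (hnorms.mul_left _) (hsab.mul_left _)
    _ = 2 ^ (s/2) * ∑' j, a j * b j := tsum_mul_left
    _ ≤ 2 ^ (s/2) * (Real.sqrt (∑' j, a j^2) * Real.sqrt (∑' j, b j^2)) := by
        apply mul_le_mul_of_nonneg_left hcs (by positivity)
    _ = 2 ^ (s/2) * (QU * QV) := by rw [ha2sum, hb2sum]

lemma abs_le_sq (k : ℤ) : |(k:ℝ)| ≤ (k:ℝ)^2 := by
  rcases eq_or_ne k 0 with h | h
  · simp [h]
  · have h1 : (1:ℝ) ≤ |(k:ℝ)| := by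
      rw [← Int.cast_abs]
      exact_mod_cast Int.one_le_abs h
    nlinarith [sq_abs (k:ℝ)]


lemma alg_helper {w m x D : ℝ} (hw : w ≠ 0) : w * (m * (x * (D / w))) = D * (x * m) := by
  field_simp

set_option maxHeartbeats 1000000 in
/-- Let η > 0, s ≥ 0, 0 < T ≤ 1. For all u, v ∈ C([0,T]; H^s(𝕋)),
`sup_{t∈[0,T]} ‖∫_0^t S(t−t') ∂ₓ(uv)(t') dt'‖_{H^s}
   ≤ C(s,η) T^{1/4} (sup_t ‖u(t)‖_{H^s}) (sup_t ‖v(t)‖_{H^s})`. -/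
theorem stmt12 (s η : ℝ) (hs : 0 ≤ s) (hη : 0 < η) :
    ∃ C > (0:ℝ), ∀ (β T : ℝ), 0 < T → T ≤ 1 → ∀ u v : ℝ → ℤ → ℂ,
      (∀ k : ℤ, ContinuousOn (fun t => u t k) (Set.Icc 0 T)) →
      (∀ k : ℤ, ContinuousOn (fun t => v t k) (Set.Icc 0 T)) →
      (∀ t ∈ Set.Icc (0:ℝ) T, Summable fun k : ℤ => (1 + (k:ℝ) ^ 2) ^ s * ‖u t k‖ ^ 2) →
      (∀ t ∈ Set.Icc (0:ℝ) T, Summable fun k : ℤ => (1 + (k:ℝ) ^ 2) ^ s * ‖v t k‖ ^ 2) →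
      BddAbove (Set.range fun t : Set.Icc (0:ℝ) T => hsNorm s (u t)) →
      BddAbove (Set.range fun t : Set.Icc (0:ℝ) T => hsNorm s (v t)) →
      ∀ t ∈ Set.Icc (0:ℝ) T,
        hsNorm s (duhamel β η u v t) ≤
          C * T ^ ((1:ℝ) / 4) * (⨆ τ : Set.Icc (0:ℝ) T, hsNorm s (u τ)) *
            (⨆ τ : Set.Icc (0:ℝ) T, hsNorm s (v τ)) := by
  have h2pi : (0:ℝ) < 2 * Real.pi := by positivity
  set c : ℝ := max (2/η) 1 with hcdef
  have hc1 : (1:ℝ) ≤ c := le_max_right _ _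
  have hc2 : 2/η ≤ c := le_max_left _ _
  have hc0 : (0:ℝ) < c := lt_of_lt_of_le one_pos hc1
  set K : ℝ := 2*(8 + c^2) with hKdef
  have hK : (0:ℝ) < K := by positivity
  set p : ℝ := Real.sqrt (2*Real.pi) with hpdef
  have hp : 0 < p := Real.sqrt_pos.2 h2pi
  set C : ℝ := 2^(s/2) * Real.sqrt K / p with hCdef
  have hC : 0 < C := div_pos (mul_pos (Real.rpow_pos_of_pos two_pos _) (Real.sqrt_pos.2 hK)) hp
  refine ⟨C, hC, ?_⟩
  intro β T hT hT1 u v hu hv huS hvS hbu hbv t ht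
  set Mu := ⨆ τ : Set.Icc (0:ℝ) T, hsNorm s (u τ) with hMudef
  set Mv := ⨆ τ : Set.Icc (0:ℝ) T, hsNorm s (v τ) with hMvdef
  have hMu0 : 0 ≤ Mu := Real.iSup_nonneg (fun τ => Real.sqrt_nonneg _)
  have hMv0 : 0 ≤ Mv := Real.iSup_nonneg (fun τ => Real.sqrt_nonneg _)
  have hT4 : (0:ℝ) ≤ T ^ ((1:ℝ)/4) := Real.rpow_nonneg hT.le _
  have hRHS0 : 0 ≤ C * T ^ ((1:ℝ)/4) * Mu * Mv := by positivity
  rcases eq_or_lt_of_le ht.1 with h0 | htpos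
  · -- t = 0 case
    have hzero : duhamel β η u v t = fun _ => 0 := by
      funext k
      simp [duhamel, ← h0]
    rw [hzero]
    simp only [hsNorm, norm_zero]
    norm_num
    exact hRHS0
  -- main case : 0 < t
  have htT : t ≤ T := ht.2
  have ht1 : t ≤ 1 := le_trans htT hT1
  have hQU : ∀ t' ∈ Set.Icc (0:ℝ) T,
      Real.sqrt (∑' j : ℤ, (1+(j:ℝ)^2)^s * ‖u t' j‖^2) ≤ Mu / p := by
    intro t' ht'
    have h1 : hsNorm s (u t') ≤ Mu := le_ciSup hbu ⟨t', ht'⟩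
    rw [hsNorm, Real.sqrt_mul h2pi.le] at h1
    rw [le_div_iff₀ hp]
    rw [mul_comm]
    exact h1
  have hQV : ∀ t' ∈ Set.Icc (0:ℝ) T,
      Real.sqrt (∑' j : ℤ, (1+(j:ℝ)^2)^s * ‖v t' j‖^2) ≤ Mv / p := by
    intro t' ht'
    have h1 : hsNorm s (v t') ≤ Mv := le_ciSup hbv ⟨t', ht'⟩
    rw [hsNorm, Real.sqrt_mul h2pi.le] at h1
    rw [le_div_iff₀ hp]
    rw [mul_comm]
    exact h1
  set D : ℝ := 2^(s/2) * ((Mu / p) * (Mv / p))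
    with hDdef
  have hD0 : 0 ≤ D := by positivity
  clear_value Mu Mv p C D K c
  -- per-k estimate
  have hk : ∀ k : ℤ, (1 + (k:ℝ)^2)^s * ‖duhamel β η u v t k‖^2 ≤
      D^2 * ((k:ℝ)^2 * (min t (c/(k:ℝ)^2))^2) := by
    intro k
    set w : ℝ := (1 + (k:ℝ)^2)^(s/2) with hwdef
    have hwpos : 0 < w := Real.rpow_pos_of_pos (by positivity) _
    clear_value w
    set a : ℝ := η * ((k:ℝ)^2 - |(k:ℝ)|) with hadef
    have ha0 : 0 ≤ a := mul_nonneg hη.le (by linarith [abs_le_sq k])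
    set m : ℝ := ∫ τ in Set.Ioo (0:ℝ) t, Real.exp (-(a*(t-τ))) with hmdef
    obtain ⟨hmt, hma⟩ := expInt ha0 htpos
    rw [← hmdef] at hmt hma
    have hm0 : 0 ≤ m := setIntegral_nonneg measurableSet_Ioo (fun τ _ => (Real.exp_pos _).le)
    -- min bound on m, first
    have hmin : |(k:ℝ)| * m ≤ |(k:ℝ)| * min t (c/(k:ℝ)^2) := by
      rcases eq_or_ne k 0 with h | h
      · simp [h]
      apply mul_le_mul_of_nonneg_left _ (abs_nonneg _)
      have hk1 : (1:ℝ) ≤ |(k:ℝ)| := by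
        rw [← Int.cast_abs]; exact_mod_cast Int.one_le_abs h
      apply le_min hmt
      rcases le_or_gt 2 |(k:ℝ)| with h2 | h2
      · -- |k| ≥ 2
        have hge : 2 * |(k:ℝ)| ≤ (k:ℝ)^2 := by nlinarith [sq_abs (k:ℝ)]
        have hP : (k:ℝ)^2 / 2 ≤ (k:ℝ)^2 - |(k:ℝ)| := by linarith
        have hk2pos : (0:ℝ) < (k:ℝ)^2 := by nlinarith
        have hapos : 0 < a := by
          rw [hadef]; apply mul_pos hη; linarith
        have hceta : 2 ≤ c * η := by
          rw [div_le_iff₀ hη] at hc2; linarith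
        have hca : (k:ℝ)^2 ≤ c * a := by
          rw [hadef, ← mul_assoc]
          nlinarith [mul_nonneg (sub_nonneg.2 hceta) (le_trans (by linarith) hP)]
        calc m ≤ 1/a := hma hapos
          _ ≤ c/(k:ℝ)^2 := by
              rw [div_le_div_iff₀ hapos hk2pos]
              linarith
      · -- |k| = 1
        have hlt' : |k| < 2 := by
          have h2' := h2
          rw [← Int.cast_abs] at h2'
          exact_mod_cast h2'
        have hge1 : (1:ℤ) ≤ |k| := Int.one_le_abs h
        have habs1 : |k| = 1 := by omega
        have hksq : (k:ℝ)^2 = 1 := by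
          have h5 : ((k^2 : ℤ) : ℝ) = ((1:ℤ):ℝ) := by
            rw [show k^2 = |k|^2 from (sq_abs k).symm, habs1]; norm_num
          push_cast at h5; linarith
        rw [hksq, div_one]
        exact le_trans hmt (le_trans ht1 hc1)
    clear_value a m
    -- pointwise bound on the integrand
    have hpt : ∀ t' ∈ Set.Ioo (0:ℝ) t,
        ‖semigroupSymbol β η (t - t') k *
          (Complex.I * (k:ℝ) * ∑' j : ℤ, u t' j * v t' (k - j))‖ ≤
        Real.exp (-(a*(t-t'))) * (|(k:ℝ)| * (D / w)) := by
      intro t' ht'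
      have ht'T : t' ∈ Set.Icc (0:ℝ) T := ⟨ht'.1.le, le_trans ht'.2.le htT⟩
      have hsymb : ‖semigroupSymbol β η (t - t') k‖ = Real.exp (-(a*(t-t'))) := by
        rw [hadef, semigroupSymbol, Complex.norm_exp]
        congr 1
        simp [Complex.mul_re, Complex.sub_re, Complex.I_re, Complex.ofReal_re,
          Complex.I_im, Complex.ofReal_im, Complex.sub_im, Complex.mul_im]
        left; left; norm_cast
      have hSigma : ‖∑' j : ℤ, u t' j * v t' (k - j)‖ ≤ D / w := by
        rw [le_div_iff₀ hwpos, mul_comm]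
        calc w * ‖∑' j : ℤ, u t' j * v t' (k - j)‖
            ≤ 2 ^ (s/2) * (Real.sqrt (∑' j : ℤ, (1 + (j:ℝ)^2) ^ s * ‖u t' j‖^2) *
              Real.sqrt (∑' j : ℤ, (1 + (j:ℝ)^2) ^ s * ‖v t' j‖^2)) := by
              rw [hwdef]
              exact convBound hs k (u t') (v t') (huS t' ht'T) (hvS t' ht'T)
          _ ≤ D := by
              rw [hDdef]
              apply mul_le_mul_of_nonneg_left _ (Real.rpow_nonneg two_pos.le _)
              apply mul_le_mul (hQU t' ht'T) (hQV t' ht'T) (Real.sqrt_nonneg _)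
                (by positivity)
      calc ‖semigroupSymbol β η (t - t') k *
          (Complex.I * (k:ℝ) * ∑' j : ℤ, u t' j * v t' (k - j))‖
          = Real.exp (-(a*(t-t'))) * (|(k:ℝ)| * ‖∑' j : ℤ, u t' j * v t' (k - j)‖) := by
            rw [norm_mul, hsymb, norm_mul, norm_mul, Complex.norm_I, one_mul,
              Complex.norm_real, Real.norm_eq_abs]
        _ ≤ Real.exp (-(a*(t-t'))) * (|(k:ℝ)| * (D / w)) := by
            apply mul_le_mul_of_nonneg_left _ (Real.exp_pos _).le
            exact mul_le_mul_of_nonneg_left hSigma (abs_nonneg _)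
    -- bound on the Duhamel coefficient
    have hdb : ‖duhamel β η u v t k‖ ≤ m * (|(k:ℝ)| * (D / w)) := by
      rw [duhamel]
      refine (norm_integral_le_integral_norm _).trans ?_
      have hgc : Continuous fun τ : ℝ => Real.exp (-(a*(t-τ))) * (|(k:ℝ)| * (D / w)) := by
        have h1 : Continuous fun τ : ℝ => -(a*(t-τ)) :=
          (continuous_const.mul (continuous_const.sub continuous_id)).neg
        exact (Real.continuous_exp.comp h1).mul continuous_const
      have hg : IntegrableOn (fun τ => Real.exp (-(a*(t-τ))) * (|(k:ℝ)| * (D / w)))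
          (Set.Ioo (0:ℝ) t) :=
        (hgc.integrableOn_Icc (a := 0) (b := t)).mono_set Set.Ioo_subset_Icc_self
      have h1 := integral_mono_of_nonneg
        (ae_of_all _ (fun τ => norm_nonneg _)) hg
        ((ae_restrict_iff' measurableSet_Ioo).2 (ae_of_all _ hpt))
      refine h1.trans_eq ?_
      rw [integral_mul_const, ← hmdef]
    clear hpt
    calc (1 + (k:ℝ)^2)^s * ‖duhamel β η u v t k‖^2
        = (w * ‖duhamel β η u v t k‖)^2 := by
          rw [mul_pow, hwdef, sq_rpow_half (by positivity : (0:ℝ) < 1 + (k:ℝ)^2)]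
      _ ≤ (D * (|(k:ℝ)| * min t (c/(k:ℝ)^2)))^2 := by
          apply pow_le_pow_left₀ (mul_nonneg hwpos.le (norm_nonneg _))
          calc w * ‖duhamel β η u v t k‖ ≤ w * (m * (|(k:ℝ)| * (D / w))) :=
                mul_le_mul_of_nonneg_left hdb hwpos.le
            _ = D * (|(k:ℝ)| * m) := alg_helper (ne_of_gt hwpos)
            _ ≤ D * (|(k:ℝ)| * min t (c/(k:ℝ)^2)) := mul_le_mul_of_nonneg_left hmin hD0
      _ = D^2 * ((k:ℝ)^2 * (min t (c/(k:ℝ)^2))^2) := by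
          rw [mul_pow, mul_pow, sq_abs]
  -- sum up
  obtain ⟨hGsum, hGbound⟩ := keyInt hc1 htpos ht1
  have hdsum : Summable (fun k : ℤ => (1+(k:ℝ)^2)^s * ‖duhamel β η u v t k‖^2) :=
    Summable.of_nonneg_of_le (fun k => by positivity) hk (hGsum.mul_left (D^2))
  have hts : ∑' k : ℤ, (1+(k:ℝ)^2)^s * ‖duhamel β η u v t k‖^2 ≤ D^2 * (K * Real.sqrt t) := by
    calc ∑' k : ℤ, (1+(k:ℝ)^2)^s * ‖duhamel β η u v t k‖^2
        ≤ ∑' k : ℤ, D^2 * ((k:ℝ)^2 * (min t (c/(k:ℝ)^2))^2) :=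
          Summable.tsum_le_tsum hk hdsum (hGsum.mul_left _)
      _ = D^2 * ∑' k : ℤ, (k:ℝ)^2 * (min t (c/(k:ℝ)^2))^2 := tsum_mul_left
      _ ≤ D^2 * (K * Real.sqrt t) := by
          apply mul_le_mul_of_nonneg_left _ (sq_nonneg D)
          rw [hKdef]
          exact hGbound
  -- conclude
  have hfin : hsNorm s (duhamel β η u v t) ≤
      Real.sqrt (2*Real.pi * (D^2 * (K * Real.sqrt t))) := by
    rw [hsNorm]
    apply Real.sqrt_le_sqrt
    apply mul_le_mul_of_nonneg_left hts h2pi.le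
  have hquarter : Real.sqrt (Real.sqrt t) = t ^ ((1:ℝ)/4) := by
    rw [Real.sqrt_eq_rpow t, Real.sqrt_eq_rpow, ← Real.rpow_mul htpos.le]
    norm_num
  have heq : Real.sqrt (2*Real.pi * (D^2 * (K * Real.sqrt t))) =
      C * t ^ ((1:ℝ)/4) * Mu * Mv := by
    rw [Real.sqrt_mul h2pi.le, Real.sqrt_mul (sq_nonneg D), Real.sqrt_sq hD0,
      Real.sqrt_mul hK.le, hquarter, ← hpdef, hDdef, hCdef]
    field_simp
  rw [heq] at hfin
  refine hfin.trans ?_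
  have h4 : t ^ ((1:ℝ)/4) ≤ T ^ ((1:ℝ)/4) := Real.rpow_le_rpow ht.1 htT (by norm_num)
  exact mul_le_mul_of_nonneg_right (mul_le_mul_of_nonneg_right
    (mul_le_mul_of_nonneg_left h4 hC.le) hMu0) hMv0
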